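/- Let K be a number field of degree d with discriminant Δ_K, a a nonzero integral ideal of O_K, k the denominator of a⁻¹, b = k·a⁻¹ ⊆ O_K, and α ∈ b a nonzero element with ‖α‖ ≤ √d·2^(d/2)·|Δ_K|^(1/(2d))·N(b)^(1/d). Then the integral ideal a' = (α/k)·a satisfies N(a') ≤ 2^(d²/2)·√|Δ_K|. -/

import Mathlib

open scoped nonZeroDivisors
open NumberField FractionalIdeal

/-- The `T₂`-norm of an element of a number field. -/
noncomputable def T2 (K : Type*) [Field K] [NumberField K] (x : K) : ℝ :=
  Real.sqrt (∑ σ : K →+* ℂ, ‖σ x‖ ^ 2)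

lemma abs_norm_eq_prod_embeddings (K : Type*) [Field K] [NumberField K] (x : K) :
    |(Algebra.norm ℚ x : ℝ)| = ∏ σ : K →+* ℂ, ‖σ x‖ := by
  have h := congr_arg (fun z : ℂ => ‖z‖) (Algebra.norm_eq_prod_embeddings ℚ ℂ x)
  rw [norm_prod] at h
  rw [Fintype.prod_equiv (RingHom.equivRatAlgHom _ _) (fun σ => ‖σ x‖)
      (fun φ => ‖φ x‖) fun _ => by simp [RingHom.equivRatAlgHom_apply], ← h,
    eq_ratCast (algebraMap ℚ ℂ) (Algebra.norm ℚ x)]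
  rw [show ((Algebra.norm ℚ x : ℚ) : ℂ) = ((Algebra.norm ℚ x : ℝ) : ℂ) by push_cast; ring,
    Complex.norm_real, Real.norm_eq_abs]

/-- The normalization bound: if `a` is a nonzero integral ideal, `k` the denominator
of `a⁻¹`, `b = k·a⁻¹ ⊆ 𝓞 K`, and `α ∈ b` nonzero with
`‖α‖ ≤ √d · 2^(d/2) · |Δ_K|^(1/2d) · N(b)^(1/d)`, then the integral ideal
`a' = (α/k)·a` satisfies `N(a') ≤ 2^(d²/2) · √|Δ_K|`. -/
theorem stmt_18 (K : Type*) [Field K] [NumberField K]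
    (a : Ideal (𝓞 K)) (ha : a ≠ 0) (k : ℕ) (hk : 0 < k)
    (hint : spanSingleton (𝓞 K)⁰ (k : K) * (a : FractionalIdeal (𝓞 K)⁰ K)⁻¹ ≤ 1)
    (hmin : ∀ m : ℕ, 0 < m →
      spanSingleton (𝓞 K)⁰ (m : K) * (a : FractionalIdeal (𝓞 K)⁰ K)⁻¹ ≤ 1 → k ≤ m)
    (b : Ideal (𝓞 K))
    (hb : (b : FractionalIdeal (𝓞 K)⁰ K) =
      spanSingleton (𝓞 K)⁰ (k : K) * (a : FractionalIdeal (𝓞 K)⁰ K)⁻¹)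
    (α : 𝓞 K) (hα : α ∈ b) (hα0 : α ≠ 0)
    (hαbd : T2 K (algebraMap (𝓞 K) K α) ≤
      Real.sqrt (Module.finrank ℚ K) * (2 : ℝ) ^ ((Module.finrank ℚ K : ℝ) / 2) *
        |(NumberField.discr K : ℝ)| ^ ((1 : ℝ) / (2 * Module.finrank ℚ K)) *
        (Ideal.absNorm b : ℝ) ^ ((1 : ℝ) / (Module.finrank ℚ K)))
    (a' : Ideal (𝓞 K))
    (ha' : (a' : FractionalIdeal (𝓞 K)⁰ K) =
      spanSingleton (𝓞 K)⁰ (algebraMap (𝓞 K) K α / (k : K)) *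
        (a : FractionalIdeal (𝓞 K)⁰ K)) :
    (Ideal.absNorm a' : ℝ) ≤
      (2 : ℝ) ^ (((Module.finrank ℚ K : ℝ) ^ 2) / 2) *
        Real.sqrt |(NumberField.discr K : ℝ)| := by
  set d := Module.finrank ℚ K with hdd
  have hd : 0 < d := Module.finrank_pos
  have hdR : (0:ℝ) < d := by exact_mod_cast hd
  set αK := algebraMap (𝓞 K) K α with hαKdef
  have hαK : αK ≠ 0 := by
    simpa [hαKdef] using (map_ne_zero_iff _ (FaithfulSMul.algebraMap_injective (𝓞 K) K)).mpr hα0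
  have hkK : (k : K) ≠ 0 := Nat.cast_ne_zero.mpr hk.ne'
  have hb0 : b ≠ 0 := fun h => hα0 (by simpa [h] using hα)
  have hNb : (0:ℝ) < Ideal.absNorm b := by
    exact_mod_cast Nat.pos_of_ne_zero fun h => hb0 (Ideal.absNorm_eq_zero_iff.mp h)
  have ha0 : (a : FractionalIdeal (𝓞 K)⁰ K) ≠ 0 := coeIdeal_ne_zero.mpr ha
  -- Step A : rational identity
  have h1 : (Ideal.absNorm a' : ℚ) = |Algebra.norm ℚ (αK / (k:K))| *
      FractionalIdeal.absNorm (a : FractionalIdeal (𝓞 K)⁰ K) := by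
    rw [← coeIdeal_absNorm (K := K), ha', _root_.map_mul, absNorm_span_singleton]
  have h2 : (Ideal.absNorm b : ℚ) = |Algebra.norm ℚ ((k:K))| *
      FractionalIdeal.absNorm ((a : FractionalIdeal (𝓞 K)⁰ K)⁻¹) := by
    rw [← coeIdeal_absNorm (K := K), hb, _root_.map_mul, absNorm_span_singleton]
  have hinv : FractionalIdeal.absNorm (a : FractionalIdeal (𝓞 K)⁰ K) *
      FractionalIdeal.absNorm ((a : FractionalIdeal (𝓞 K)⁰ K)⁻¹) = 1 := by
    rw [← _root_.map_mul, mul_inv_cancel₀ ha0, absNorm_one]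
  have hA : (Ideal.absNorm a' : ℚ) * (Ideal.absNorm b : ℚ) = |Algebra.norm ℚ αK| := by
    calc (Ideal.absNorm a' : ℚ) * (Ideal.absNorm b : ℚ)
        = |Algebra.norm ℚ (αK / (k:K))| * |Algebra.norm ℚ ((k:K))| *
          (FractionalIdeal.absNorm (a : FractionalIdeal (𝓞 K)⁰ K) *
           FractionalIdeal.absNorm ((a : FractionalIdeal (𝓞 K)⁰ K)⁻¹)) := by
          rw [h1, h2]; ring
      _ = |Algebra.norm ℚ (αK / (k:K) * (k:K))| := by rw [hinv, mul_one, ← abs_mul, ← _root_.map_mul]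
      _ = |Algebra.norm ℚ αK| := by rw [div_mul_cancel₀ _ hkK]
  -- Step B : real bound on the norm
  set Δ : ℝ := |(NumberField.discr K : ℝ)| with hΔdef
  have hΔ : (0:ℝ) ≤ Δ := abs_nonneg _
  set C : ℝ := (2 : ℝ) ^ ((d : ℝ) / 2) * Δ ^ ((1 : ℝ) / (2 * d)) *
    (Ideal.absNorm b : ℝ) ^ ((1 : ℝ) / d) with hCdef
  have hC : 0 ≤ C := by positivity
  set f : (K →+* ℂ) → ℝ := fun σ => ‖σ αK‖ ^ 2 with hfdef
  have hf : ∀ σ : K →+* ℂ, 0 ≤ f σ := fun σ => by positivity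
  have hS : (0:ℝ) ≤ ∑ σ : K →+* ℂ, f σ := Finset.sum_nonneg fun σ _ => hf σ
  have hSle : ∑ σ : K →+* ℂ, f σ ≤ (d : ℝ) * C ^ 2 := by
    have h := pow_le_pow_left₀ (Real.sqrt_nonneg _) hαbd 2
    have h' : ∑ σ : K →+* ℂ, f σ ≤ (Real.sqrt d * (2 : ℝ) ^ ((d : ℝ) / 2) *
        Δ ^ ((1 : ℝ) / (2 * d)) * (Ideal.absNorm b : ℝ) ^ ((1 : ℝ) / d)) ^ 2 := by
      rw [← Real.sq_sqrt hS]; simp only [hfdef]; exact h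
    calc ∑ σ : K →+* ℂ, f σ ≤ (Real.sqrt d * (2 : ℝ) ^ ((d : ℝ) / 2) *
          Δ ^ ((1 : ℝ) / (2 * d)) * (Ideal.absNorm b : ℝ) ^ ((1 : ℝ) / d)) ^ 2 := h'
      _ = (d : ℝ) * C ^ 2 := by
          rw [hCdef]; rw [show Real.sqrt d * (2 : ℝ) ^ ((d : ℝ) / 2) * Δ ^ ((1 : ℝ) / (2 * d)) *
            (Ideal.absNorm b : ℝ) ^ ((1 : ℝ) / d) = Real.sqrt d * ((2 : ℝ) ^ ((d : ℝ) / 2) *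
            Δ ^ ((1 : ℝ) / (2 * d)) * (Ideal.absNorm b : ℝ) ^ ((1 : ℝ) / d)) by ring,
            mul_pow, Real.sq_sqrt hdR.le]
  -- AM-GM
  have hcard : (Fintype.card (K →+* ℂ) : ℝ) = (d : ℝ) := by
    exact_mod_cast congrArg Nat.cast (NumberField.Embeddings.card K ℂ)
  have hAMGM : (∏ σ : K →+* ℂ, f σ) ^ ((1:ℝ)/d) ≤ C ^ 2 := by
    have := Real.geom_mean_le_arith_mean_weighted Finset.univ (fun _ => (1:ℝ)/d) f
      (fun i _ => by positivity)
      (by rw [Finset.sum_const, nsmul_eq_mul, Finset.card_univ, hcard]; field_simp)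
      (fun i _ => hf i)
    rw [← Real.finset_prod_rpow _ _ (fun i _ => hf i)]
    refine le_trans this ?_
    rw [← Finset.mul_sum]
    calc (1:ℝ)/d * ∑ σ : K →+* ℂ, f σ ≤ (1:ℝ)/d * ((d:ℝ) * C ^ 2) :=
          mul_le_mul_of_nonneg_left hSle (by positivity)
      _ = C ^ 2 := by field_simp
  have hprod : (∏ σ : K →+* ℂ, f σ) = |(Algebra.norm ℚ αK : ℝ)| ^ 2 := by
    rw [abs_norm_eq_prod_embeddings, ← Finset.prod_pow]
  have hN2 : |(Algebra.norm ℚ αK : ℝ)| ^ 2 ≤ (C ^ 2) ^ (d : ℝ) := by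
    rw [← hprod]
    have h := Real.rpow_le_rpow (by positivity) hAMGM (le_of_lt hdR)
    rwa [← Real.rpow_mul (Finset.prod_nonneg fun i _ => hf i),
      one_div_mul_cancel hdR.ne', Real.rpow_one] at h
  have hsq : ((C ^ 2) ^ (d : ℝ)) = (C ^ (d : ℝ)) ^ 2 := by
    rw [← Real.rpow_natCast C 2, ← Real.rpow_natCast (C ^ (d : ℝ)) 2,
      ← Real.rpow_mul hC, ← Real.rpow_mul hC, mul_comm]
  have hNle : |(Algebra.norm ℚ αK : ℝ)| ≤
      (2:ℝ) ^ (((d:ℝ)^2)/2) * Real.sqrt Δ * (Ideal.absNorm b : ℝ) := by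
    have h1 : |(Algebra.norm ℚ αK : ℝ)| ≤ C ^ (d : ℝ) := by
      have h2 := Real.sqrt_le_sqrt hN2
      rwa [Real.sqrt_sq (abs_nonneg _), hsq,
        Real.sqrt_sq (Real.rpow_nonneg hC _)] at h2
    refine h1.trans_eq ?_
    rw [hCdef, Real.mul_rpow (by positivity) (by positivity),
      Real.mul_rpow (by positivity) (by positivity),
      ← Real.rpow_mul (by norm_num : (0:ℝ) ≤ 2), ← Real.rpow_mul hΔ,
      ← Real.rpow_mul (Nat.cast_nonneg _),
      show (d:ℝ)/2*(d:ℝ) = ((d:ℝ)^2)/2 by ring,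
      show (1:ℝ)/(2*(d:ℝ))*(d:ℝ) = 1/2 by field_simp,
      show (1:ℝ)/(d:ℝ)*(d:ℝ) = 1 by field_simp,
      Real.rpow_one, ← Real.sqrt_eq_rpow]
  have hAR : (Ideal.absNorm a' : ℝ) * (Ideal.absNorm b : ℝ) =
      |(Algebra.norm ℚ αK : ℝ)| := by exact_mod_cast congrArg (fun q : ℚ => (q : ℝ)) hA
  refine le_of_mul_le_mul_right ?_ hNb
  rw [hAR]
  exact hNle
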